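/- Suppose (a*, b*) ∈ (0,∞) × (0,∞) is a joint critical point of J, i.e. ∂J/∂a(a*,b*) = 0 and ∂J/∂b(a*,b*) = 0. Then a* = c·γ'(b*)/(k·q·μ_α·θ'(b*)) and J(a*,b*) = k·a* = c·γ'(b*)/(q·μ_α·θ'(b*)). -/

import Mathlib

theorem stmt16 (c α lam q μ k : ℝ)
    (hc : 0 < c) (hα0 : 0 < α) (hα1 : α ≤ 1)
    (hlam : 0 < lam) (hq : 0 < q) (hμ : 0 < μ) (hk : 1 ≤ k)
    (Δ Φ ρ : ℝ)
    (hΔ : Δ = (c*μ - α*lam - α*q)^2 + 4*α*c*μ*q)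
    (hΦ : Φ = (-(c*μ - α*lam - α*q) + Real.sqrt Δ) / (2*α*c))
    (hρ : ρ = (-(c*μ - α*lam - α*q) - Real.sqrt Δ) / (2*α*c))
    (hΦpos : 0 < Φ) (hρneg : ρ < 0)
    (γ θf m : ℝ → ℝ) (D J ψ : ℝ → ℝ → ℝ)
    (hγ : ∀ b, γ b = (Φ - ρ)/(Φ*Real.exp (Φ*b) - ρ*Real.exp (ρ*b)))
    (hθf : ∀ b, θf b = (Real.exp (Φ*b) - Real.exp (ρ*b))/(Φ*Real.exp (Φ*b) - ρ*Real.exp (ρ*b)))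
    (hm : ∀ a, m a = (1 - Real.exp (-(μ/α)*a)*((μ/α)*a + 1))/(μ/α))
    (hD : ∀ a b, D a b = q + (μ/α)*q*θf b + lam*Real.exp (-(μ/α)*a))
    (hJ : ∀ a b, J a b = (c*γ b - lam*k*m a)/(D a b))
    (hψ : ∀ a b, ψ a b = -(a*k*(q + q*(μ/α)*θf b)) + c*γ b + lam*k*(Real.exp (-(μ/α)*a) - 1)/(μ/α)) :
    ∀ astar bstar : ℝ, 0 < astar → 0 < bstar →
      deriv (fun a => J a bstar) astar = 0 →
      deriv (fun b => J astar b) bstar = 0 →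
      astar = c * deriv γ bstar / (k*q*(μ/α)*deriv θf bstar) ∧
      J astar bstar = k * astar ∧
      J astar bstar = c * deriv γ bstar / (q*(μ/α)*deriv θf bstar) := by
  intro astar bstar ha hb hda hdb
  set μα := μ/α with hμα_def
  have hμα : 0 < μα := div_pos hμ hα0
  have hk0 : (0:ℝ) < k := lt_of_lt_of_le one_pos hk
  -- exponentials at bstar
  have heΦ : 0 < Real.exp (Φ*bstar) := Real.exp_pos _
  have heρ : 0 < Real.exp (ρ*bstar) := Real.exp_pos _
  have hDd : 0 < Φ*Real.exp (Φ*bstar) - ρ*Real.exp (ρ*bstar) := by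
    nlinarith [mul_pos hΦpos heΦ, mul_pos (neg_pos.mpr hρneg) heρ]
  -- derivatives of the linear maps and exponentials in b
  have hlin1 : HasDerivAt (fun b : ℝ => Φ*b) Φ bstar := by
    simpa using (hasDerivAt_id bstar).const_mul Φ
  have hlin2 : HasDerivAt (fun b : ℝ => ρ*b) ρ bstar := by
    simpa using (hasDerivAt_id bstar).const_mul ρ
  have hE1 : HasDerivAt (fun b : ℝ => Real.exp (Φ*b)) (Real.exp (Φ*bstar) * Φ) bstar := hlin1.exp
  have hE2 : HasDerivAt (fun b : ℝ => Real.exp (ρ*b)) (Real.exp (ρ*bstar) * ρ) bstar := hlin2.exp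
  have hDdA : HasDerivAt (fun b : ℝ => Φ*Real.exp (Φ*b) - ρ*Real.exp (ρ*b))
      (Φ*(Real.exp (Φ*bstar) * Φ) - ρ*(Real.exp (ρ*bstar) * ρ)) bstar :=
    (hE1.const_mul Φ).sub (hE2.const_mul ρ)
  have hNA : HasDerivAt (fun b : ℝ => Real.exp (Φ*b) - Real.exp (ρ*b))
      (Real.exp (Φ*bstar) * Φ - Real.exp (ρ*bstar) * ρ) bstar := hE1.sub hE2
  -- derivative of θf
  set tval := ((Real.exp (Φ*bstar) * Φ - Real.exp (ρ*bstar) * ρ) *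
      (Φ*Real.exp (Φ*bstar) - ρ*Real.exp (ρ*bstar)) -
      (Real.exp (Φ*bstar) - Real.exp (ρ*bstar)) *
      (Φ*(Real.exp (Φ*bstar) * Φ) - ρ*(Real.exp (ρ*bstar) * ρ))) /
      (Φ*Real.exp (Φ*bstar) - ρ*Real.exp (ρ*bstar))^2 with htval_def
  have hθA : HasDerivAt θf tval bstar := by
    rw [funext hθf]
    exact hNA.div hDdA hDd.ne'
  have htval_pos : 0 < tval := by
    rw [htval_def]
    apply div_pos
    · have hnum : (Real.exp (Φ*bstar) * Φ - Real.exp (ρ*bstar) * ρ) *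
          (Φ*Real.exp (Φ*bstar) - ρ*Real.exp (ρ*bstar)) -
          (Real.exp (Φ*bstar) - Real.exp (ρ*bstar)) *
          (Φ*(Real.exp (Φ*bstar) * Φ) - ρ*(Real.exp (ρ*bstar) * ρ))
          = (Φ-ρ)^2 * (Real.exp (Φ*bstar) * Real.exp (ρ*bstar)) := by ring
      rw [hnum]
      have hne : Φ - ρ ≠ 0 := by linarith
      positivity
    · positivity
  -- derivative of γ
  set gval := (0 * (Φ*Real.exp (Φ*bstar) - ρ*Real.exp (ρ*bstar)) -
      (Φ - ρ) * (Φ*(Real.exp (Φ*bstar) * Φ) - ρ*(Real.exp (ρ*bstar) * ρ))) /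
      (Φ*Real.exp (Φ*bstar) - ρ*Real.exp (ρ*bstar))^2 with hgval_def
  have hγA : HasDerivAt γ gval bstar := by
    rw [funext hγ]
    exact (hasDerivAt_const bstar (Φ - ρ)).div hDdA hDd.ne'
  have hdθ : deriv θf bstar = tval := hθA.deriv
  have hdγ : deriv γ bstar = gval := hγA.deriv
  -- positivity of θf bstar and the denominator
  have hθfpos : 0 ≤ θf bstar := by
    rw [hθf]
    apply div_nonneg _ hDd.le
    have h1 : ρ * bstar ≤ Φ * bstar := by nlinarith
    have := Real.exp_le_exp.mpr h1
    linarith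
  have hE : 0 < Real.exp (-μα*astar) := Real.exp_pos _
  have hDv' : 0 < q + μα*q*θf bstar + lam*Real.exp (-μα*astar) := by
    have h1 : 0 ≤ μα*q*θf bstar := by positivity
    nlinarith [mul_pos hlam hE]
  have hDvne : (q + μα*q*θf bstar + lam*Real.exp (-μα*astar)) ≠ 0 := hDv'.ne'
  have hDv : 0 < D astar bstar := by rw [hD]; exact hDv'
  -- derivative in a
  have hlinA : HasDerivAt (fun a : ℝ => -μα*a) (-μα) astar := by
    simpa using (hasDerivAt_id astar).const_mul (-μα)
  have hEA : HasDerivAt (fun a : ℝ => Real.exp (-μα*a)) (Real.exp (-μα*astar) * (-μα)) astar :=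
    hlinA.exp
  have hmul : HasDerivAt (fun a : ℝ => Real.exp (-μα*a) * (μα*a + 1))
      (Real.exp (-μα*astar) * (-μα) * (μα*astar + 1) + Real.exp (-μα*astar) * μα) astar := by
    refine hEA.mul ?_
    simpa using ((hasDerivAt_id astar).const_mul μα).add_const 1
  have hmA : HasDerivAt (fun a : ℝ => (1 - Real.exp (-μα*a)*((μα)*a + 1))/μα)
      (astar * Real.exp (-μα*astar) * μα) astar := by
    have h := ((hasDerivAt_const astar 1).sub hmul).div_const μα
    refine h.congr_deriv ?_
    rw [div_eq_iff hμα.ne']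
    ring
  have hNumA : HasDerivAt (fun a : ℝ => c*γ bstar - lam*k*((1 - Real.exp (-μα*a)*((μα)*a + 1))/μα))
      (0 - lam*k*(astar * Real.exp (-μα*astar) * μα)) astar :=
    (hasDerivAt_const astar (c*γ bstar)).sub (hmA.const_mul (lam*k))
  have hDenA : HasDerivAt (fun a : ℝ => q + μα*q*θf bstar + lam*Real.exp (-μα*a))
      (0 + lam*(Real.exp (-μα*astar) * (-μα))) astar :=
    (hasDerivAt_const astar (q + μα*q*θf bstar)).add (hEA.const_mul lam)
  have hJaA : HasDerivAt (fun a => J a bstar)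
      (((0 - lam*k*(astar * Real.exp (-μα*astar) * μα)) *
        (q + μα*q*θf bstar + lam*Real.exp (-μα*astar)) -
        (c*γ bstar - lam*k*((1 - Real.exp (-μα*astar)*((μα)*astar + 1))/μα)) *
        (0 + lam*(Real.exp (-μα*astar) * (-μα)))) /
      (q + μα*q*θf bstar + lam*Real.exp (-μα*astar))^2) astar := by
    have heq : (fun a => J a bstar) =
        fun a => (c*γ bstar - lam*k*((1 - Real.exp (-μα*a)*((μα)*a + 1))/μα)) /
          (q + μα*q*θf bstar + lam*Real.exp (-μα*a)) := by
      funext a; rw [hJ, hm, hD]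
    rw [heq]
    exact hNumA.div hDenA hDvne
  -- first critical point equation:  Nv = k * astar * Dv
  have key1 : c*γ bstar - lam*k*m astar =
      k * astar * (q + μα*q*θf bstar + lam*Real.exp (-μα*astar)) := by
    have h0 := hJaA.deriv
    rw [hda] at h0
    have h1 : (0 - lam*k*(astar * Real.exp (-μα*astar) * μα)) *
        (q + μα*q*θf bstar + lam*Real.exp (-μα*astar)) -
        (c*γ bstar - lam*k*((1 - Real.exp (-μα*astar)*((μα)*astar + 1))/μα)) *
        (0 + lam*(Real.exp (-μα*astar) * (-μα))) = 0 := by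
      rcases div_eq_zero_iff.mp h0.symm with h | h
      · exact h
      · exact absurd h (by positivity)
    rw [← hm astar] at h1
    have hfac : lam * μα * Real.exp (-μα*astar) *
        ((c*γ bstar - lam*k*m astar) -
          k * astar * (q + μα*q*θf bstar + lam*Real.exp (-μα*astar))) = 0 := by
      linear_combination h1
    rcases mul_eq_zero.mp hfac with h | h
    · exact absurd h (by positivity)
    · linarith
  -- derivative in b
  have hNumB : HasDerivAt (fun b : ℝ => c*γ b - lam*k*m astar) (c*gval - 0) bstar :=
    (hγA.const_mul c).sub (hasDerivAt_const bstar (lam*k*m astar))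
  have hDenB : HasDerivAt (fun b : ℝ => q + μα*q*θf b + lam*Real.exp (-μα*astar))
      (μα*q*tval) bstar := by
    have h1 : HasDerivAt (fun b : ℝ => q + μα*q*θf b) (μα*q*tval) bstar := by
      simpa using (hθA.const_mul (μα*q)).const_add q
    exact h1.add_const (lam*Real.exp (-μα*astar))
  have hne1 : k*q*μα*tval ≠ 0 := by positivity
  have hne2 : q*μα*tval ≠ 0 := by positivity
  have hJbA : HasDerivAt (fun b => J astar b)
      (((c*gval - 0) * (q + μα*q*θf bstar + lam*Real.exp (-μα*astar)) -
        (c*γ bstar - lam*k*m astar) * (μα*q*tval)) /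
        (q + μα*q*θf bstar + lam*Real.exp (-μα*astar))^2) bstar := by
    have heq : (fun b => J astar b) =
        fun b => (c*γ b - lam*k*m astar) / (q + μα*q*θf b + lam*Real.exp (-μα*astar)) := by
      funext b; rw [hJ, hD]
    rw [heq]
    exact hNumB.div hDenB hDvne
  -- second critical point equation
  have key2 : c * gval = k * astar * (μα * q * tval) := by
    have h0 := hJbA.deriv
    rw [hdb] at h0
    have h1 : (c*gval - 0) * (q + μα*q*θf bstar + lam*Real.exp (-μα*astar)) -
        (c*γ bstar - lam*k*m astar) * (μα*q*tval) = 0 := by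
      rcases div_eq_zero_iff.mp h0.symm with h | h
      · exact h
      · exact absurd h (by positivity)
    rw [key1] at h1
    have hfac : (q + μα*q*θf bstar + lam*Real.exp (-μα*astar)) *
        (c * gval - k * astar * (μα * q * tval)) = 0 := by
      linear_combination h1
    rcases mul_eq_zero.mp hfac with h | h
    · exact absurd h hDvne
    · linarith
  -- conclusions
  have hJval : J astar bstar = k * astar := by
    rw [hJ, hD, key1]
    field_simp
  refine ⟨?_, hJval, ?_⟩
  · rw [hdγ, hdθ, key2,
      show k*astar*(μα*q*tval) = astar*(k*q*μα*tval) from by ring,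
      mul_div_cancel_right₀ _ hne1]
  · rw [hJval, hdγ, hdθ, key2,
      show k*astar*(μα*q*tval) = (k*astar)*(q*μα*tval) from by ring,
      mul_div_cancel_right₀ _ hne2]
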